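/- For every finitely supported function ν from the positive integers to the non-negative integers, the inclusion O_F(ν) ↪ E⁻¹O_F becomes an isomorphism after applying E⁻¹O_F ⊗_{O_F} (−); that is, the induced map E⁻¹O_F ⊗_{O_F} O_F(ν) → E⁻¹O_F ⊗_{O_F} E⁻¹O_F ≅ E⁻¹O_F is an isomorphism of O_F-modules. (This shows the algebraic sphere S^ν is an object of the abelian model A.) -/

import Mathlib

open LaurentPolynomial

noncomputable section

/-- The ring `O_F = ∏_{n ≥ 1} ℚ[c_n]`. -/
abbrev OF : Type := ∀ _ : ℕ+, Polynomial ℚ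

/-- The product of Laurent polynomial rings `∏_{n ≥ 1} ℚ[c_n, c_n⁻¹]`. -/
abbrev LF : Type := ∀ _ : ℕ+, LaurentPolynomial ℚ

/-- The subring of `ℚ[c,c⁻¹]` of Laurent polynomials with no negative-degree terms. -/
def polyRange : Subring (LaurentPolynomial ℚ) :=
  (Polynomial.toLaurent (R := ℚ)).range

/-- `E⁻¹O_F` : sequences of Laurent polynomials which are polynomial at all but
finitely many indices. -/
def EinvOF : Subring LF where
  carrier := {f : LF | {n : ℕ+ | f n ∉ polyRange}.Finite}
  zero_mem' := by
    refine Set.finite_empty.subset fun n hn => ?_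
    simp only [Set.mem_setOf_eq, Pi.zero_apply] at hn
    exact hn (zero_mem _)
  one_mem' := by
    refine Set.finite_empty.subset fun n hn => ?_
    simp only [Set.mem_setOf_eq, Pi.one_apply] at hn
    exact hn (one_mem _)
  add_mem' := by
    intro a b ha hb
    refine (ha.union hb).subset fun n hn => ?_
    simp only [Set.mem_setOf_eq, Pi.add_apply] at hn
    by_contra h
    simp only [Set.mem_union, Set.mem_setOf_eq, not_or, not_not] at h
    exact hn (add_mem h.1 h.2)
  mul_mem' := by
    intro a b ha hb
    refine (ha.union hb).subset fun n hn => ?_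
    simp only [Set.mem_setOf_eq, Pi.mul_apply] at hn
    by_contra h
    simp only [Set.mem_union, Set.mem_setOf_eq, not_or, not_not] at h
    exact hn (mul_mem h.1 h.2)
  neg_mem' := by
    intro a ha
    refine ha.subset fun n hn => ?_
    simp only [Set.mem_setOf_eq, Pi.neg_apply] at hn
    simp only [Set.mem_setOf_eq]
    exact fun h => hn (neg_mem h)

lemma jFull_mem (f : OF) :
    (fun n => Polynomial.toLaurent (f n) : LF) ∈ EinvOF := by
  refine Set.finite_empty.subset fun n hn => ?_
  exact hn ⟨f n, rfl⟩

/-- The evident ring homomorphism `j : O_F → E⁻¹O_F`. -/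
def j : OF →+* EinvOF :=
  (Pi.ringHom fun n => (Polynomial.toLaurent (R := ℚ)).comp (Pi.evalRingHom _ n)).codRestrict
    EinvOF (fun f => jFull_mem f)

/-- `E⁻¹O_F` is an `O_F`-algebra (hence an `O_F`-module) via `j`. -/
instance : Algebra OF EinvOF := j.toAlgebra

open TensorProduct

def cpow (ν : ℕ+ →₀ ℕ) : OF := fun n => Polynomial.X ^ ν n

/-- `j(O_F)` as an `O_F`-submodule of `E⁻¹O_F`. -/
def jRangeSub : Submodule OF EinvOF := LinearMap.range (Algebra.linearMap OF EinvOF)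

/-- The `O_F`-submodule `O_F(ν) = { x ∈ E⁻¹O_F : c^ν · x ∈ j(O_F) }`. -/
def OFnu (ν : ℕ+ →₀ ℕ) : Submodule OF EinvOF :=
  Submodule.comap (LinearMap.mulLeft OF (j (cpow ν))) jRangeSub

lemma mem_OFnu (ν : ℕ+ →₀ ℕ) (x : EinvOF) :
    x ∈ OFnu ν ↔ j (cpow ν) * x ∈ j.range := Iff.rfl

/-!
STATEMENT 10: For every finitely supported `ν : ℕ+ → ℕ`, the inclusion `O_F(ν) ↪ E⁻¹O_F`
becomes an isomorphism after applying `E⁻¹O_F ⊗_{O_F} (−)`; i.e. the induced map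
`E⁻¹O_F ⊗_{O_F} O_F(ν) → E⁻¹O_F ⊗_{O_F} E⁻¹O_F ≅ E⁻¹O_F` is an isomorphism of `O_F`-modules.
(This shows the algebraic sphere `S^ν` is an object of the abelian model `A`.)
-/


/-! Auxiliary lemmas -/

set_option maxHeartbeats 1000000
set_option synthInstance.maxHeartbeats 400000

lemma invc_mem (ν : ℕ+ →₀ ℕ) : (fun n => T (-(ν n : ℤ)) : LF) ∈ EinvOF := by
  refine (ν.support.finite_toSet).subset fun n hn => ?_
  simp only [Set.mem_setOf_eq] at hn
  simp only [Finset.mem_coe, Finsupp.mem_support_iff]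
  intro h
  rw [h] at hn
  exact hn ⟨1, by simp [T_zero]⟩

/-- The inverse of `j (cpow ν)` in `E⁻¹O_F`. -/
def invc (ν : ℕ+ →₀ ℕ) : EinvOF := ⟨_, invc_mem ν⟩

lemma j_cpow_mul_invc (ν : ℕ+ →₀ ℕ) : j (cpow ν) * invc ν = 1 := by
  apply Subtype.ext
  rw [Subring.coe_mul]
  funext n
  simp only [Pi.mul_apply, OneMemClass.coe_one, Pi.one_apply]
  show Polynomial.toLaurent (cpow ν n) * T (-(ν n : ℤ)) = 1
  show Polynomial.toLaurent (Polynomial.X ^ ν n) * T (-(ν n : ℤ)) = 1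
  rw [Polynomial.toLaurent_X_pow, ← T_add, add_neg_cancel, T_zero]

lemma exists_clear (y : EinvOF) :
    ∃ (μ : ℕ+ →₀ ℕ) (b : OF), j (cpow μ) * y = j b := by
  classical
  have hfin : {n : ℕ+ | (y : LF) n ∉ polyRange}.Finite := y.2
  have key : ∀ n : ℕ+, ∃ (k : ℕ) (p : Polynomial ℚ),
      ((y : LF) n ∈ polyRange → k = 0) ∧ Polynomial.toLaurent p = (y : LF) n * T k := by
    intro n
    by_cases h : (y : LF) n ∈ polyRange
    · obtain ⟨p, hp⟩ := h
      exact ⟨0, p, fun _ => rfl, by simpa [T_zero] using hp⟩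
    · obtain ⟨k, p, hp⟩ := ((y : LF) n).exists_T_pow
      exact ⟨k, p, fun hc => absurd hc h, hp⟩
  choose k p hk hp using key
  refine ⟨Finsupp.onFinset hfin.toFinset k (fun n hn => ?_), p, ?_⟩
  · simp only [Set.Finite.mem_toFinset, Set.mem_setOf_eq]
    intro hmem
    exact hn (hk n hmem)
  · apply Subtype.ext
    rw [Subring.coe_mul]
    funext n
    simp only [Pi.mul_apply]
    show Polynomial.toLaurent (Polynomial.X ^ _) * (y : LF) n = Polynomial.toLaurent (p n)
    rw [Polynomial.toLaurent_X_pow, hp n, mul_comm]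
    rfl

lemma algebraMap_eq_j : (algebraMap OF EinvOF) = j := rfl

lemma smul_eq_j_mul (a : OF) (x : EinvOF) : a • x = j a * x := Algebra.smul_def a x

/-- `invc ν` as an element of `O_F(ν)`. -/
def gnu (ν : ℕ+ →₀ ℕ) : OFnu ν := ⟨invc ν, by
  rw [mem_OFnu]
  exact ⟨1, by rw [map_one, j_cpow_mul_invc]⟩⟩

/-- The inverse map `E⁻¹O_F ⊗ E⁻¹O_F → E⁻¹O_F ⊗ O_F(ν)`. -/
def psi (ν : ℕ+ →₀ ℕ) : (EinvOF ⊗[OF] EinvOF) →ₗ[OF] (EinvOF ⊗[OF] (OFnu ν)) :=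
  TensorProduct.lift <| LinearMap.mk₂ OF
    (fun x y => (x * j (cpow ν) * y) ⊗ₜ[OF] gnu ν)
    (fun x₁ x₂ y => by rw [add_mul, add_mul, TensorProduct.add_tmul])
    (fun a x y => by rw [smul_mul_assoc, smul_mul_assoc, TensorProduct.smul_tmul'])
    (fun x y₁ y₂ => by rw [mul_add, TensorProduct.add_tmul])
    (fun a x y => by rw [mul_smul_comm, TensorProduct.smul_tmul'])

lemma psi_tmul (ν : ℕ+ →₀ ℕ) (x y : EinvOF) :
    psi ν (x ⊗ₜ[OF] y) = (x * j (cpow ν) * y) ⊗ₜ[OF] gnu ν := rfl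

theorem stmt10 (ν : ℕ+ →₀ ℕ) :
    Function.Bijective (LinearMap.baseChange EinvOF (OFnu ν).subtype) := by
  classical
  set φ := LinearMap.baseChange EinvOF (OFnu ν).subtype with hφ
  have hleft : ((psi ν) ∘ₗ (φ.restrictScalars OF)) = LinearMap.id := by
    apply TensorProduct.ext'
    intro x s
    simp only [LinearMap.comp_apply, LinearMap.restrictScalars_apply, hφ,
      LinearMap.baseChange_tmul, Submodule.subtype_apply, LinearMap.id_apply, psi_tmul]
    obtain ⟨a, ha⟩ := s.2
    have ha' : j a = j (cpow ν) * (s : EinvOF) := ha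
    have h1 : x * j (cpow ν) * (s : EinvOF) = a • x := by
      rw [mul_assoc, ← ha', smul_eq_j_mul, mul_comm]
    rw [h1, TensorProduct.smul_tmul]
    congr 1
    apply Subtype.ext
    show (a • gnu ν : OFnu ν).1 = (s : EinvOF)
    rw [Submodule.coe_smul]
    show a • invc ν = (s : EinvOF)
    rw [smul_eq_j_mul, ha', mul_comm (j (cpow ν)) (s : EinvOF), mul_assoc,
      j_cpow_mul_invc, mul_one]
  have hright : ((φ.restrictScalars OF) ∘ₗ (psi ν)) = LinearMap.id := by
    apply TensorProduct.ext'
    intro x y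
    simp only [LinearMap.comp_apply, LinearMap.restrictScalars_apply, psi_tmul, hφ,
      LinearMap.baseChange_tmul, Submodule.subtype_apply, LinearMap.id_apply]
    show (x * j (cpow ν) * y) ⊗ₜ[OF] (invc ν) = x ⊗ₜ[OF] y
    obtain ⟨μ, b, hb⟩ := exists_clear y
    have hunit : IsUnit ((j (cpow μ) ⊗ₜ[OF] (1 : EinvOF)) : EinvOF ⊗[OF] EinvOF) := by
      refine IsUnit.of_mul_eq_one ((invc μ) ⊗ₜ[OF] (1 : EinvOF)) ?_
      rw [Algebra.TensorProduct.tmul_mul_tmul, j_cpow_mul_invc, mul_one]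
      rfl
    apply hunit.mul_left_cancel
    rw [Algebra.TensorProduct.tmul_mul_tmul, Algebra.TensorProduct.tmul_mul_tmul, one_mul,
      one_mul]
    have e1' : j (cpow μ) * (x * j (cpow ν) * y) = cpow ν • (x * j b) := by
      rw [smul_eq_j_mul, ← hb]; ring
    have e2 : j (cpow μ) * x = cpow μ • x := (smul_eq_j_mul _ _).symm
    rw [e1', e2, TensorProduct.smul_tmul, TensorProduct.smul_tmul, smul_eq_j_mul,
      smul_eq_j_mul, j_cpow_mul_invc, hb]
    rw [show (j b : EinvOF) = b • (1:EinvOF) by rw [smul_eq_j_mul, mul_one],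
      ← TensorProduct.smul_tmul]
    congr 1
    rw [smul_eq_j_mul b 1, mul_one, Algebra.smul_def b x]
    exact mul_comm x _
  constructor
  · exact Function.LeftInverse.injective (g := psi ν)
      (fun z => LinearMap.congr_fun hleft z)
  · exact Function.RightInverse.surjective (g := psi ν)
      (fun z => LinearMap.congr_fun hright z)


end
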